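/- For every natural number n, the polynomial identity Σ_{k, k̄ ≥ 0} C(n, k, k̄) · X^k = (X+1)(X+3)⋯(X+2n−1) = ∏_{i=0}^{n−1} (X + 2i + 1) holds in ℤ[X]. (The sum is finite since C(n, k, k̄) = 0 for k + k̄ > n; for n = 0 both sides equal 1.) -/

import Mathlib

/-- The order `≺` on signed letters: `x ≺ y` iff `|x| < |y|`, or `|x| = |y|` with `x`
barred (negative) and `y` unbarred. -/
def SPrec (x y : ℤ) : Prop := x.natAbs < y.natAbs ∨ (x.natAbs = y.natAbs ∧ x < y)

/-- `w : Fin n → ℤ` is a signed permutation of `n`: each entry has absolute value in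
`{1,…,n}` and the absolute values are pairwise distinct (hence a permutation of `1,…,n`);
in particular every entry is nonzero. -/
def IsSignedPerm {n : ℕ} (w : Fin n → ℤ) : Prop :=
  (∀ t, 1 ≤ (w t).natAbs ∧ (w t).natAbs ≤ n) ∧
    Function.Injective fun t => (w t).natAbs

/-- Position `t` is a left-to-right minimum of `w`: `w t ≺ w s` for all `s < t`. -/
def IsLRMin {n : ℕ} (w : Fin n → ℤ) (t : Fin n) : Prop :=
  ∀ s, s < t → SPrec (w t) (w s)

/-- Position `t` lies in the Lyndon factor beginning at position `m`: `m ≤ t` and no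
left-to-right minimum occurs strictly between `m` (exclusive) and `t` (inclusive). -/
def InFactor {n : ℕ} (w : Fin n → ℤ) (m t : Fin n) : Prop :=
  m ≤ t ∧ ∀ s, m < s → s ≤ t → ¬ IsLRMin w s

/-- The number of barred (negative) entries in the Lyndon factor of `w` beginning at `m`. -/
noncomputable def barredCount {n : ℕ} (w : Fin n → ℤ) (m : Fin n) : ℕ :=
  Nat.card { t : Fin n // InFactor w m t ∧ w t < 0 }

/-- The number of Lyndon factors of `w` with an odd number of barred entries. -/
noncomputable def numOddFactors {n : ℕ} (w : Fin n → ℤ) : ℕ :=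
  Nat.card { m : Fin n // IsLRMin w m ∧ Odd (barredCount w m) }

/-- The number of Lyndon factors of `w` with an even number of barred entries. -/
noncomputable def numEvenFactors {n : ℕ} (w : Fin n → ℤ) : ℕ :=
  Nat.card { m : Fin n // IsLRMin w m ∧ Even (barredCount w m) }

/-- `C(n, k, k̄)`: the number of signed permutations of `n` whose Lyndon factorization has
exactly `k` factors with an odd number of barred entries and exactly `k̄` factors with an
even number of barred entries. -/
noncomputable def bigC (n k kb : ℕ) : ℕ :=
  Nat.card { w : Fin n → ℤ // IsSignedPerm w ∧ numOddFactors w = k ∧ numEvenFactors w = kb }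

/-- `c(n, k)`: the signless Stirling number of the first kind, i.e. the number of
permutations of `(1,…,n)` with exactly `k` left-to-right minima. -/
noncomputable def littleC (n k : ℕ) : ℕ :=
  Nat.card { σ : Equiv.Perm (Fin n) //
    Nat.card { t : Fin n // ∀ s, s < t → σ t < σ s } = k }

open Finset

section A
open scoped Classical
variable {n : ℕ}

lemma sprec_of_abs_lt {x y : ℤ} (h : x.natAbs < y.natAbs) : SPrec x y := Or.inl h

lemma sprec_iff_of_abs_ne {x y : ℤ} (h : x.natAbs ≠ y.natAbs) :
    SPrec x y ↔ x.natAbs < y.natAbs := by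
  constructor
  · rintro (h1 | ⟨h1, _⟩)
    · exact h1
    · exact absurd h1 h
  · exact Or.inl

/-- LR minima only depend on absolute values, for injective-abs words. -/
lemma isLRMin_congr {w v : Fin n → ℤ} (hinj : Function.Injective fun t => (w t).natAbs)
    (habs : ∀ t, (v t).natAbs = (w t).natAbs) (t : Fin n) :
    IsLRMin v t ↔ IsLRMin w t := by
  unfold IsLRMin
  refine forall₂_congr fun s hs => ?_
  have hne : (v t).natAbs ≠ (v s).natAbs := by
    rw [habs, habs]; exact fun h => (ne_of_lt hs) (hinj h).symm
  have hne' : (w t).natAbs ≠ (w s).natAbs := by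
    rw [← habs, ← habs]; exact hne
  rw [sprec_iff_of_abs_ne hne, sprec_iff_of_abs_ne hne', habs, habs]

lemma inFactor_congr {w v : Fin n → ℤ} (hinj : Function.Injective fun t => (w t).natAbs)
    (habs : ∀ t, (v t).natAbs = (w t).natAbs) (m t : Fin n) :
    InFactor v m t ↔ InFactor w m t := by
  unfold InFactor
  refine and_congr Iff.rfl (forall_congr' fun s => ?_)
  rw [isLRMin_congr hinj habs]

/-- `barredCount` as a `Finset` card. -/
lemma barredCount_eq (w : Fin n → ℤ) (m : Fin n) :
    barredCount w m = (univ.filter fun t => InFactor w m t ∧ w t < 0).card := by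
  rw [barredCount, Nat.card_eq_fintype_card, Fintype.card_subtype]

lemma numOdd_eq (w : Fin n → ℤ) :
    numOddFactors w = (univ.filter fun m => IsLRMin w m ∧ Odd (barredCount w m)).card := by
  rw [numOddFactors, Nat.card_eq_fintype_card, Fintype.card_subtype]

lemma numOdd_le (w : Fin n → ℤ) : numOddFactors w ≤ n := by
  rw [numOdd_eq]
  calc _ ≤ (univ : Finset (Fin n)).card := card_filter_le _ _
  _ = n := Finset.card_fin n

lemma numEven_eq (w : Fin n → ℤ) :
    numEvenFactors w = (univ.filter fun m => IsLRMin w m ∧ Even (barredCount w m)).card := by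
  rw [numEvenFactors, Nat.card_eq_fintype_card, Fintype.card_subtype]

lemma numEven_le (w : Fin n → ℤ) : numEvenFactors w ≤ n := by
  rw [numEven_eq]
  calc _ ≤ (univ : Finset (Fin n)).card := card_filter_le _ _
  _ = n := Finset.card_fin n

end A
section B
open scoped Classical
variable {n : ℕ}

/-- Flip the sign of the entry at position `k`. -/
def flipAt (w : Fin n → ℤ) (k : Fin n) : Fin n → ℤ := Function.update w k (-(w k))

lemma flipAt_abs (w : Fin n → ℤ) (k t : Fin n) : ((flipAt w k) t).natAbs = (w t).natAbs := by
  rcases eq_or_ne t k with rfl | h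
  · simp [flipAt]
  · simp [flipAt, Function.update_of_ne h]

lemma flipAt_flipAt (w : Fin n → ℤ) (k : Fin n) : flipAt (flipAt w k) k = w := by
  funext t
  rcases eq_or_ne t k with rfl | h
  · simp [flipAt]
  · simp [flipAt, Function.update_of_ne h]

lemma flipAt_isSignedPerm {w : Fin n → ℤ} (hw : IsSignedPerm w) (k : Fin n) :
    IsSignedPerm (flipAt w k) := by
  obtain ⟨h1, h2⟩ := hw
  refine ⟨fun t => by rw [flipAt_abs]; exact h1 t, fun s t h => h2 ?_⟩
  simpa only [flipAt_abs] using h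

lemma flipAt_isLRMin {w : Fin n → ℤ} (hw : IsSignedPerm w) (k t : Fin n) :
    IsLRMin (flipAt w k) t ↔ IsLRMin w t :=
  isLRMin_congr hw.2 (flipAt_abs w k) t

lemma flipAt_inFactor {w : Fin n → ℤ} (hw : IsSignedPerm w) (k m t : Fin n) :
    InFactor (flipAt w k) m t ↔ InFactor w m t :=
  inFactor_congr hw.2 (flipAt_abs w k) m t

lemma flipAt_barred_notMem {w : Fin n → ℤ} (hw : IsSignedPerm w) {k m : Fin n}
    (h : ¬ InFactor w m k) : barredCount (flipAt w k) m = barredCount w m := by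
  rw [barredCount_eq, barredCount_eq]
  congr 1
  apply filter_congr
  intro t _
  rw [flipAt_inFactor hw]
  rcases eq_or_ne t k with rfl | hne
  · exact iff_of_false (fun hc => h hc.1) (fun hc => h hc.1)
  · rw [flipAt, Function.update_of_ne hne]

lemma flipAt_barred_mem_pos {w : Fin n → ℤ} (hw : IsSignedPerm w) {k m : Fin n}
    (h : InFactor w m k) (hk : 0 < w k) :
    barredCount (flipAt w k) m = barredCount w m + 1 := by
  rw [barredCount_eq, barredCount_eq]
  have hset : (univ.filter fun t => InFactor (flipAt w k) m t ∧ (flipAt w k) t < 0)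
      = insert k (univ.filter fun t => InFactor w m t ∧ w t < 0) := by
    ext t
    simp only [mem_filter, mem_univ, true_and, mem_insert, flipAt_inFactor hw]
    rcases eq_or_ne t k with rfl | hne
    · simp only [eq_self_iff_true, true_or, iff_true]
      exact ⟨h, by simpa [flipAt] using hk⟩
    · rw [flipAt, Function.update_of_ne hne]
      simp [hne]
  rw [hset, card_insert_of_notMem (by simp [hk.not_gt])]

lemma flipAt_odd_iff {w : Fin n → ℤ} (hw : IsSignedPerm w) {k m : Fin n}
    (h : InFactor w m k) :
    Odd (barredCount (flipAt w k) m) ↔ ¬ Odd (barredCount w m) := by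
  have hk : w k ≠ 0 := by
    intro h0
    have := (hw.1 k).1
    rw [h0] at this; simp at this
  rcases lt_or_gt_of_ne hk with hneg | hpos
  · -- w k < 0; apply the pos lemma to flipAt w k
    have hpos' : 0 < (flipAt w k) k := by simp [flipAt]; omega
    have h' : InFactor (flipAt w k) m k := (flipAt_inFactor hw k m k).2 h
    have := flipAt_barred_mem_pos (flipAt_isSignedPerm hw k) h' hpos'
    rw [flipAt_flipAt] at this
    rw [this] at *
    rw [Nat.odd_add_one, not_not]
  · rw [flipAt_barred_mem_pos hw h hpos, Nat.odd_add_one]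

end B
section C
open scoped Classical
variable {n : ℕ}

lemma succAbove_val (p : Fin (n+1)) (s : Fin n) :
    ((p.succAbove s : Fin (n+1)) : ℕ) = if (s : ℕ) < (p : ℕ) then (s : ℕ) else (s : ℕ) + 1 := by
  rw [Fin.succAbove]
  split_ifs with h1 h2 h2
  · rfl
  · exact absurd (by simpa [Fin.lt_def] using h1) h2
  · exact absurd (by simpa [Fin.lt_def] using h2) h1
  · rfl

/-- Split a cardinality over `Fin (n+1)` into the pivot `p` and the rest. -/
lemma card_filter_fin_succ (p : Fin (n+1)) (P : Fin (n+1) → Prop) [DecidablePred P] :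
    (univ.filter P).card =
      ((univ : Finset (Fin n)).filter fun s => P (p.succAbove s)).card
        + (if P p then 1 else 0) := by
  have hsplit : (univ.filter P) =
      ((univ.filter fun s => P (p.succAbove s)).map (Fin.succAboveEmb p)) ∪ (filter P ({p} : Finset (Fin (n+1)))) := by
    ext t
    simp only [mem_filter, mem_univ, true_and, mem_union, mem_map, Fin.succAboveEmb,
      Function.Embedding.coeFn_mk, mem_singleton]
    constructor
    · intro ht
      rcases eq_or_ne t p with rfl | hne
      · exact Or.inr ⟨rfl, ht⟩
      · obtain ⟨s, rfl⟩ := Fin.exists_succAbove_eq hne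
        exact Or.inl ⟨s, ht, rfl⟩
    · rintro (⟨s, hs, rfl⟩ | ⟨rfl, h⟩)
      · exact hs
      · exact h
  have hdisj : Disjoint ((univ.filter fun s => P (p.succAbove s)).map (Fin.succAboveEmb p))
      (filter P ({p} : Finset (Fin (n+1)))) := by
    rw [disjoint_right]
    intro x hx hmem
    simp only [mem_filter, mem_singleton] at hx
    simp only [mem_map, Fin.succAboveEmb, Function.Embedding.coeFn_mk] at hmem
    obtain ⟨s, -, hs⟩ := hmem
    exact Fin.succAbove_ne p s (hx.1 ▸ hs)
  rw [hsplit, card_union_of_disjoint hdisj, card_map]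
  congr 1
  rw [filter_singleton]
  split_ifs <;> simp

/-- Insertion, non-dependently typed. -/
def insF (p : Fin (n+1)) (a : ℤ) (w : Fin n → ℤ) : Fin (n+1) → ℤ :=
  Fin.insertNth (α := fun _ => ℤ) p a w

variable {w : Fin n → ℤ} {p : Fin (n+1)} {a : ℤ}

lemma ins_apply_succAbove (s : Fin n) : (insF p a w) (p.succAbove s) = w s :=
  Fin.insertNth_apply_succAbove (α := fun _ => ℤ) p a w s

lemma ins_apply_same : (insF p a w) p = a := Fin.insertNth_apply_same (α := fun _ => ℤ) p a w

lemma ins_apply_eq_of_ne {t : Fin (n+1)} (h : t ≠ p) :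
    ∃ s, p.succAbove s = t ∧ (insF p a w) t = w s := by
  obtain ⟨s, rfl⟩ := Fin.exists_succAbove_eq h
  exact ⟨s, rfl, ins_apply_succAbove s⟩

lemma ins_abs_lt (hw : IsSignedPerm w) (ha : a.natAbs = n + 1) (s : Fin n) :
    (w s).natAbs < a.natAbs := by
  rw [ha]; exact Nat.lt_succ_of_le (hw.1 s).2

lemma ins_isSignedPerm (hw : IsSignedPerm w) (ha : a.natAbs = n + 1) :
    IsSignedPerm (insF p a w) := by
  constructor
  · intro t
    rcases eq_or_ne t p with rfl | hne
    · rw [ins_apply_same, ha]; omega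
    · obtain ⟨s, rfl⟩ := Fin.exists_succAbove_eq hne
      rw [ins_apply_succAbove]
      exact ⟨(hw.1 s).1, (hw.1 s).2.trans (Nat.le_succ n)⟩
  · intro t1 t2 h
    simp only at h
    rcases eq_or_ne p t1 with rfl | h1
    · rcases eq_or_ne p t2 with rfl | h2
      · rfl
      · obtain ⟨s, rfl⟩ := Fin.exists_succAbove_eq h2.symm
        rw [ins_apply_same, ins_apply_succAbove] at h
        exact absurd h.symm (ne_of_lt (ins_abs_lt hw ha s))
    · rcases eq_or_ne p t2 with rfl | h2
      · obtain ⟨s, rfl⟩ := Fin.exists_succAbove_eq h1.symm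
        rw [ins_apply_same, ins_apply_succAbove] at h
        exact absurd h (ne_of_lt (ins_abs_lt hw ha s))
      · obtain ⟨s1, rfl⟩ := Fin.exists_succAbove_eq h1.symm
        obtain ⟨s2, rfl⟩ := Fin.exists_succAbove_eq h2.symm
        rw [ins_apply_succAbove, ins_apply_succAbove] at h
        exact congrArg _ (hw.2 h)

lemma ins_sprec_p (hw : IsSignedPerm w) (ha : a.natAbs = n + 1) (s : Fin n) :
    SPrec ((insF p a w) (p.succAbove s)) ((insF p a w) p) := by
  rw [ins_apply_succAbove, ins_apply_same]
  exact sprec_of_abs_lt (ins_abs_lt hw ha s)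

lemma ins_isLRMin_succAbove (hw : IsSignedPerm w) (ha : a.natAbs = n + 1) (s : Fin n) :
    IsLRMin (insF p a w) (p.succAbove s) ↔ IsLRMin w s := by
  constructor
  · intro h s' hs'
    have := h (p.succAbove s') (by
      simp only [Fin.lt_def, succAbove_val]
      have := Fin.lt_def.1 hs'
      split_ifs <;> omega)
    rwa [ins_apply_succAbove, ins_apply_succAbove] at this
  · intro h u hu
    rcases eq_or_ne u p with rfl | hne
    · rw [ins_apply_succAbove, ins_apply_same]
      exact sprec_of_abs_lt (ins_abs_lt hw ha s)
    · obtain ⟨s', rfl⟩ := Fin.exists_succAbove_eq hne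
      rw [ins_apply_succAbove, ins_apply_succAbove]
      apply h
      have := Fin.lt_def.1 hu
      simp only [succAbove_val] at this
      rw [Fin.lt_def]
      split_ifs at this <;> omega

lemma ins_isLRMin_p (hw : IsSignedPerm w) (ha : a.natAbs = n + 1) :
    IsLRMin (insF p a w) p ↔ p = 0 := by
  constructor
  · intro h
    by_contra hp
    have hppos : 0 < (p : ℕ) := by
      rcases Nat.eq_zero_or_pos (p : ℕ) with h' | h'
      · exact absurd (Fin.ext h') hp
      · exact h'
    -- the position just before p
    have hn : 0 < n := by have := p.isLt; omega
    have hs : ((⟨(p : ℕ) - 1, by omega⟩ : Fin n) : ℕ) = (p : ℕ) - 1 := rfl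
    set s : Fin n := ⟨(p : ℕ) - 1, by omega⟩
    have hlt : p.succAbove s < p := by
      rw [Fin.lt_def, succAbove_val]
      split_ifs <;> omega
    have := h (p.succAbove s) hlt
    rw [ins_apply_same, ins_apply_succAbove] at this
    rcases this with h1 | ⟨h1, -⟩
    · exact absurd h1 (not_lt_of_ge (le_of_lt (ins_abs_lt hw ha s)))
    · exact absurd h1.symm (ne_of_lt (ins_abs_lt hw ha s))
  · rintro rfl
    intro u hu
    exact absurd hu (Fin.not_lt_zero u)

lemma ins_inFactor_succAbove (hw : IsSignedPerm w) (ha : a.natAbs = n + 1) (s t : Fin n) :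
    InFactor (insF p a w) (p.succAbove s) (p.succAbove t) ↔ InFactor w s t := by
  constructor
  · rintro ⟨h1, h2⟩
    refine ⟨?_, fun s' hs1 hs2 hmin => ?_⟩
    · have := Fin.le_def.1 h1
      simp only [succAbove_val] at this
      rw [Fin.le_def]
      split_ifs at this <;> omega
    · refine h2 (p.succAbove s') ?_ ?_ ((ins_isLRMin_succAbove hw ha s').2 hmin)
      · simp only [Fin.lt_def, succAbove_val]
        have := Fin.lt_def.1 hs1
        split_ifs <;> omega
      · simp only [Fin.le_def, succAbove_val]
        have := Fin.le_def.1 hs2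
        split_ifs <;> omega
  · rintro ⟨h1, h2⟩
    refine ⟨?_, fun u hu1 hu2 hmin => ?_⟩
    · simp only [Fin.le_def, succAbove_val]
      have := Fin.le_def.1 h1
      split_ifs <;> omega
    · rcases eq_or_ne u p with rfl | hne
      · rw [ins_isLRMin_p hw ha] at hmin
        subst hmin
        exact absurd hu1 (Fin.not_lt_zero _)
      · obtain ⟨s', rfl⟩ := Fin.exists_succAbove_eq hne
        rw [ins_isLRMin_succAbove hw ha] at hmin
        refine h2 s' ?_ ?_ hmin
        · have := Fin.lt_def.1 hu1
          simp only [succAbove_val] at this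
          rw [Fin.lt_def]
          split_ifs at this <;> omega
        · have := Fin.le_def.1 hu2
          simp only [succAbove_val] at this
          rw [Fin.le_def]
          split_ifs at this <;> omega

lemma ins_inFactor_p_zero (hp : p = 0) (s : Fin n) :
    ¬ InFactor (insF p a w) (p.succAbove s) p := by
  rintro ⟨h1, -⟩
  have := Fin.le_def.1 h1
  rw [succAbove_val] at this
  have h0 : ((p : Fin (n+1)) : ℕ) = 0 := by rw [hp]; rfl
  split_ifs at this <;> omega

lemma ins_inFactor_p_of_ne (hw : IsSignedPerm w) (ha : a.natAbs = n + 1)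
    (hp : p ≠ 0) {k : Fin n} (hk : (k : ℕ) + 1 = (p : ℕ)) (s : Fin n) :
    InFactor (insF p a w) (p.succAbove s) p ↔ InFactor w s k := by
  constructor
  · rintro ⟨h1, h2⟩
    refine ⟨?_, fun s' hs1 hs2 hmin => ?_⟩
    · have := Fin.le_def.1 h1
      simp only [succAbove_val] at this
      rw [Fin.le_def]
      split_ifs at this <;> omega
    · refine h2 (p.succAbove s') ?_ ?_ ((ins_isLRMin_succAbove hw ha s').2 hmin)
      · simp only [Fin.lt_def, succAbove_val]
        have := Fin.lt_def.1 hs1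
        split_ifs <;> omega
      · simp only [Fin.le_def, succAbove_val]
        have h3 := Fin.le_def.1 hs2
        split_ifs <;> omega
  · rintro ⟨h1, h2⟩
    refine ⟨?_, fun u hu1 hu2 hmin => ?_⟩
    · simp only [Fin.le_def, succAbove_val]
      have := Fin.le_def.1 h1
      split_ifs <;> omega
    · rcases eq_or_ne u p with rfl | hne
      · rw [ins_isLRMin_p hw ha] at hmin
        exact hp hmin
      · obtain ⟨s', rfl⟩ := Fin.exists_succAbove_eq hne
        rw [ins_isLRMin_succAbove hw ha] at hmin
        have hu1' := Fin.lt_def.1 hu1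
        have hu2' := Fin.le_def.1 hu2
        simp only [succAbove_val] at hu1' hu2'
        refine h2 s' ?_ ?_ hmin
        · rw [Fin.lt_def]; split_ifs at hu1' <;> split_ifs at hu2' <;> omega
        · rw [Fin.le_def]; split_ifs at hu1' <;> split_ifs at hu2' <;> omega

lemma ins_inFactor_zero (hw : IsSignedPerm w) (ha : a.natAbs = n + 1) (hp : p = 0)
    (t : Fin (n+1)) : InFactor (insF p a w) p t ↔ t = p := by
  constructor
  · rintro ⟨h1, h2⟩
    by_contra hne
    obtain ⟨t', rfl⟩ := Fin.exists_succAbove_eq hne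
    -- position p.succAbove ⟨0⟩ is an LR min sitting in (p, t]
    have hn : 0 < n := by have := t'.isLt; omega
    have hz : ((⟨0, hn⟩ : Fin n) : ℕ) = 0 := rfl
    set z : Fin n := ⟨0, hn⟩
    have hp0 : (p : ℕ) = 0 := by rw [hp]; rfl
    refine h2 (p.succAbove z) ?_ ?_ ((ins_isLRMin_succAbove hw ha z).2 ?_)
    · rw [Fin.lt_def, succAbove_val]
      split_ifs <;> omega
    · rw [Fin.le_def, succAbove_val, succAbove_val]
      have := t'.isLt
      split_ifs <;> omega
    · intro u hu
      rw [Fin.lt_def, hz] at hu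
      omega
  · rintro rfl
    exact ⟨le_refl _, fun s hs1 hs2 _ => absurd (lt_of_lt_of_le hs1 hs2) (lt_irrefl _)⟩
end C
section D
open scoped Classical
variable {n : ℕ} {w : Fin n → ℤ} {p : Fin (n+1)} {a : ℤ}

lemma ins_barred_succAbove (hw : IsSignedPerm w) (ha : a.natAbs = n + 1) (s : Fin n) :
    barredCount (insF p a w) (p.succAbove s) =
      barredCount w s
        + (if InFactor (insF p a w) (p.succAbove s) p ∧ a < 0 then 1 else 0) := by
  rw [barredCount_eq, barredCount_eq]
  refine (card_filter_fin_succ p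
    (fun t => InFactor (insF p a w) (p.succAbove s) t ∧ (insF p a w) t < 0)).trans ?_
  congr 1
  · congr 1
    apply filter_congr
    intro t _
    rw [ins_apply_succAbove, ins_inFactor_succAbove hw ha]
  · rw [ins_apply_same]

lemma ins_barred_zero (hw : IsSignedPerm w) (ha : a.natAbs = n + 1) (hp : p = 0) :
    barredCount (insF p a w) p = if a < 0 then 1 else 0 := by
  rw [barredCount_eq]
  refine (card_filter_fin_succ p
    (fun t => InFactor (insF p a w) p t ∧ (insF p a w) t < 0)).trans ?_
  have h1 : (univ.filter fun s : Fin n =>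
      InFactor (insF p a w) p (p.succAbove s) ∧ (insF p a w) (p.succAbove s) < 0) = ∅ := by
    apply filter_eq_empty_iff.2
    intro s _
    rw [ins_inFactor_zero hw ha hp]
    exact fun h => Fin.succAbove_ne p s h.1
  rw [h1, card_empty, Nat.zero_add, ins_apply_same]
  have h2 : InFactor (insF p a w) p p := (ins_inFactor_zero hw ha hp p).2 rfl
  simp [h2]

lemma ins_numOdd_zero (hw : IsSignedPerm w) (ha : a.natAbs = n + 1) (hp : p = 0) :
    numOddFactors (insF p a w) = numOddFactors w + (if a < 0 then 1 else 0) := by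
  rw [numOdd_eq, numOdd_eq]
  refine (card_filter_fin_succ p
    (fun m => IsLRMin (insF p a w) m ∧ Odd (barredCount (insF p a w) m))).trans ?_
  congr 1
  · congr 1
    apply filter_congr
    intro s _
    rw [ins_isLRMin_succAbove hw ha, ins_barred_succAbove hw ha]
    have : ¬ InFactor (insF p a w) (p.succAbove s) p := ins_inFactor_p_zero hp s
    simp [this]
  · have hmin : IsLRMin (insF p a w) p := (ins_isLRMin_p hw ha).2 hp
    rw [ins_barred_zero hw ha hp]
    by_cases hneg : a < 0 <;> simp [hmin, hneg]

lemma ins_numOdd_pos (hw : IsSignedPerm w) (ha : a.natAbs = n + 1) (hp : p ≠ 0)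
    (hpos : 0 ≤ a) : numOddFactors (insF p a w) = numOddFactors w := by
  rw [numOdd_eq, numOdd_eq]
  refine (card_filter_fin_succ p
    (fun m => IsLRMin (insF p a w) m ∧ Odd (barredCount (insF p a w) m))).trans ?_
  have hnot : ¬ IsLRMin (insF p a w) p := fun h => hp ((ins_isLRMin_p hw ha).1 h)
  simp only [hnot, false_and, if_false, Nat.add_zero]
  congr 1
  apply filter_congr
  intro s _
  rw [ins_isLRMin_succAbove hw ha, ins_barred_succAbove hw ha]
  simp [not_lt.2 hpos]

lemma ins_numOdd_neg (hw : IsSignedPerm w) (ha : a.natAbs = n + 1) (hp : p ≠ 0)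
    {k : Fin n} (hk : (k : ℕ) + 1 = (p : ℕ)) (hneg : a < 0) :
    numOddFactors (insF p a w) = numOddFactors (flipAt w k) := by
  rw [numOdd_eq, numOdd_eq]
  refine (card_filter_fin_succ p
    (fun m => IsLRMin (insF p a w) m ∧ Odd (barredCount (insF p a w) m))).trans ?_
  have hnot : ¬ IsLRMin (insF p a w) p := fun h => hp ((ins_isLRMin_p hw ha).1 h)
  simp only [hnot, false_and, if_false, Nat.add_zero]
  congr 1
  apply filter_congr
  intro s _
  rw [ins_isLRMin_succAbove hw ha, ins_barred_succAbove hw ha,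
    flipAt_isLRMin hw, ins_inFactor_p_of_ne hw ha hp hk]
  by_cases hin : InFactor w s k
  · rw [flipAt_odd_iff hw hin]
    simp [hin, hneg, Nat.odd_add_one]
  · rw [flipAt_barred_notMem hw hin]
    simp [hin]

end D
section E
open scoped Classical
open Polynomial
variable {n : ℕ}

def sgnVal (n : ℕ) (b : Bool) : ℤ := if b then -((n : ℤ) + 1) else (n : ℤ) + 1

lemma sgnVal_natAbs {b : Bool} : (sgnVal n b).natAbs = n + 1 := by
  cases b <;> simp [sgnVal] <;> omega

lemma sgnVal_neg_iff {b : Bool} : sgnVal n b < 0 ↔ b = true := by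
  cases b <;> simp [sgnVal] <;> omega

lemma sgnVal_inj {b1 b2 : Bool} (h : sgnVal n b1 = sgnVal n b2) : b1 = b2 := by
  cases b1 <;> cases b2 <;> simp_all [sgnVal] <;> omega

def predIdx (p : Fin (n+1)) (h : p ≠ 0) : Fin n :=
  ⟨(p : ℕ) - 1, by
    have h1 := p.isLt
    have h2 : 0 < (p : ℕ) := Nat.pos_of_ne_zero (fun h0 => h (Fin.ext h0))
    omega⟩

lemma predIdx_val (p : Fin (n+1)) (h : p ≠ 0) : ((predIdx p h : Fin n) : ℕ) + 1 = (p : ℕ) := by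
  have h2 : 0 < (p : ℕ) := Nat.pos_of_ne_zero (fun h0 => h (Fin.ext h0))
  simp only [predIdx]
  omega

def PhiW (w : Fin n → ℤ) (p : Fin (n+1)) (b : Bool) : Fin n → ℤ :=
  if h : p = 0 then w else if b then flipAt w (predIdx p h) else w

def Phi (w : Fin n → ℤ) (p : Fin (n+1)) (b : Bool) : Fin (n+1) → ℤ :=
  insF p (sgnVal n b) (PhiW w p b)

lemma PhiW_abs (w : Fin n → ℤ) (p : Fin (n+1)) (b : Bool) (t : Fin n) :
    ((PhiW w p b) t).natAbs = (w t).natAbs := by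
  unfold PhiW
  split_ifs <;> simp [flipAt_abs]

lemma PhiW_isSignedPerm {w : Fin n → ℤ} (hw : IsSignedPerm w) (p : Fin (n+1)) (b : Bool) :
    IsSignedPerm (PhiW w p b) := by
  unfold PhiW
  split_ifs
  · exact hw
  · exact flipAt_isSignedPerm hw _
  · exact hw

lemma PhiW_invol (w : Fin n → ℤ) (p : Fin (n+1)) (b : Bool) :
    PhiW (PhiW w p b) p b = w := by
  unfold PhiW
  split_ifs <;> simp [flipAt_flipAt]

lemma Phi_isSignedPerm {w : Fin n → ℤ} (hw : IsSignedPerm w) (p : Fin (n+1)) (b : Bool) :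
    IsSignedPerm (Phi w p b) :=
  ins_isSignedPerm (PhiW_isSignedPerm hw p b) sgnVal_natAbs

lemma Phi_numOdd {w : Fin n → ℤ} (hw : IsSignedPerm w) (p : Fin (n+1)) (b : Bool) :
    numOddFactors (Phi w p b) = numOddFactors w + (if p = 0 ∧ b = true then 1 else 0) := by
  unfold Phi PhiW
  by_cases h : p = 0
  · rw [dif_pos h, ins_numOdd_zero hw sgnVal_natAbs h]
    congr 1
    cases b <;> simp [sgnVal_neg_iff, h]
  · rw [dif_neg h]
    cases b with
    | false =>
      rw [if_neg Bool.false_ne_true, ins_numOdd_pos hw sgnVal_natAbs h (by simp [sgnVal]; omega)]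
      simp [h]
    | true =>
      rw [if_pos rfl,
        ins_numOdd_neg (flipAt_isSignedPerm hw _) sgnVal_natAbs h (predIdx_val p h)
          (by simp [sgnVal]; omega),
        flipAt_flipAt]
      simp [h]

lemma Phi_apply_p (w : Fin n → ℤ) (p : Fin (n+1)) (b : Bool) :
    (Phi w p b) p = sgnVal n b := ins_apply_same

lemma Phi_apply_succAbove (w : Fin n → ℤ) (p : Fin (n+1)) (b : Bool) (s : Fin n) :
    (Phi w p b) (p.succAbove s) = (PhiW w p b) s := ins_apply_succAbove s

lemma Phi_inj {w1 w2 : Fin n → ℤ} {p1 p2 : Fin (n+1)} {b1 b2 : Bool}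
    (hw1 : IsSignedPerm w1) (hw2 : IsSignedPerm w2)
    (h : Phi w1 p1 b1 = Phi w2 p2 b2) : w1 = w2 ∧ p1 = p2 ∧ b1 = b2 := by
  have hp : p1 = p2 := by
    by_contra hne
    obtain ⟨s, hs⟩ := Fin.exists_succAbove_eq hne
    have h1 : ((Phi w1 p1 b1) p1).natAbs = n + 1 := by rw [Phi_apply_p]; exact sgnVal_natAbs
    have h2 : ((Phi w2 p2 b2) p1).natAbs ≤ n := by
      rw [← hs, Phi_apply_succAbove, PhiW_abs]
      exact (hw2.1 s).2
    rw [h] at h1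
    omega
  subst hp
  have hb : b1 = b2 := by
    have := congrFun h p1
    rw [Phi_apply_p, Phi_apply_p] at this
    exact sgnVal_inj this
  subst hb
  refine ⟨?_, rfl, rfl⟩
  have hPW : PhiW w1 p1 b1 = PhiW w2 p1 b1 := by
    funext s
    have := congrFun h (p1.succAbove s)
    rwa [Phi_apply_succAbove, Phi_apply_succAbove] at this
  have := congrArg (fun u => PhiW u p1 b1) hPW
  simpa only [PhiW_invol] using this

lemma exists_abs_eq {v : Fin (n+1) → ℤ} (hv : IsSignedPerm v) :
    ∃ p, (v p).natAbs = n + 1 := by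
  have himg : Finset.image (fun t => (v t).natAbs) univ = Finset.Icc 1 (n+1) := by
    apply Finset.eq_of_subset_of_card_le
    · intro x hx
      obtain ⟨t, -, rfl⟩ := Finset.mem_image.1 hx
      rw [Finset.mem_Icc]
      exact hv.1 t
    · rw [Finset.card_image_of_injective _ hv.2, Nat.card_Icc, Finset.card_univ,
        Fintype.card_fin]
      omega
  have : n + 1 ∈ Finset.image (fun t => (v t).natAbs) univ := by
    rw [himg, Finset.mem_Icc]; omega
  obtain ⟨p, -, hp⟩ := Finset.mem_image.1 this
  exact ⟨p, hp⟩

lemma Phi_surj {v : Fin (n+1) → ℤ} (hv : IsSignedPerm v) :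
    ∃ w p b, IsSignedPerm w ∧ Phi w p b = v := by
  obtain ⟨p, hp⟩ := exists_abs_eq hv
  set w' : Fin n → ℤ := fun s => v (p.succAbove s) with hw'def
  have hw' : IsSignedPerm w' := by
    constructor
    · intro s
      refine ⟨(hv.1 (p.succAbove s)).1, ?_⟩
      have h1 := (hv.1 (p.succAbove s)).2
      have h2 : (v (p.succAbove s)).natAbs ≠ n + 1 := by
        intro he
        exact Fin.succAbove_ne p s (hv.2 (he.trans hp.symm))
      simp only [hw'def]
      omega
    · intro s1 s2 h
      exact Fin.succAbove_right_injective (hv.2 h)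
  set b : Bool := decide (v p < 0) with hbdef
  have hvp : v p = sgnVal n b := by
    rcases Int.natAbs_eq_iff.1 hp with h1 | h1
    · have : ¬ (v p < 0) := by rw [h1]; push_cast; omega
      rw [hbdef]
      simp [this, sgnVal, h1]
      push_cast; omega
    · have : v p < 0 := by rw [h1]; push_cast; omega
      rw [hbdef]
      simp [this, sgnVal, h1]
      push_cast; omega
  refine ⟨PhiW w' p b, p, b, PhiW_isSignedPerm hw' p b, ?_⟩
  have hv_eq : v = insF p (sgnVal n b) w' := by
    funext t
    rcases eq_or_ne t p with rfl | hne
    · rw [ins_apply_same, hvp]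
    · obtain ⟨s, rfl⟩ := Fin.exists_succAbove_eq hne
      rw [ins_apply_succAbove]
  rw [Phi, PhiW_invol, ← hv_eq]

lemma isSignedPerm_finite (n : ℕ) : {w : Fin n → ℤ | IsSignedPerm w}.Finite := by
  apply Set.Finite.subset (Set.Finite.pi (fun i : Fin n => Set.finite_Icc (-(n:ℤ)) (n:ℤ)))
  intro w hw
  rw [Set.mem_pi]
  intro i _
  have := (hw.1 i).2
  rw [Set.mem_Icc]
  omega

noncomputable def spFinset (n : ℕ) : Finset (Fin n → ℤ) := (isSignedPerm_finite n).toFinset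

lemma mem_spFinset {w : Fin n → ℤ} : w ∈ spFinset n ↔ IsSignedPerm w :=
  Set.Finite.mem_toFinset _

lemma key (n : ℕ) :
    ∑ w ∈ spFinset n, (X : ℤ[X]) ^ (numOddFactors w) =
      ∏ i ∈ range n, (X + C (2 * (i : ℤ) + 1)) := by
  induction n with
  | zero =>
    have h0 : spFinset 0 = {fun t : Fin 0 => (0 : ℤ)} := by
      apply Finset.eq_singleton_iff_unique_mem.2
      constructor
      · rw [mem_spFinset]
        exact ⟨fun t => t.elim0, fun t => t.elim0⟩
      · intro w _
        funext t
        exact t.elim0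
    rw [h0, sum_singleton, range_zero, prod_empty]
    have h1 : numOddFactors (fun t : Fin 0 => (0 : ℤ)) = 0 := by
      rw [numOdd_eq]
      simp
    rw [h1, pow_zero]
  | succ n ih =>
    rw [prod_range_succ, ← ih, Finset.sum_mul]
    have hbij : ∑ x ∈ (spFinset n) ×ˢ (univ : Finset (Fin (n+1) × Bool)),
        (X : ℤ[X]) ^ (numOddFactors (Phi x.1 x.2.1 x.2.2))
        = ∑ v ∈ spFinset (n+1), (X : ℤ[X]) ^ (numOddFactors v) := by
      refine Finset.sum_bij (fun x _ => Phi x.1 x.2.1 x.2.2) ?_ ?_ ?_ ?_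
      · rintro ⟨w, p, b⟩ hx
        rw [mem_spFinset]
        exact Phi_isSignedPerm (mem_spFinset.1 (Finset.mem_product.1 hx).1) p b
      · rintro ⟨w1, p1, b1⟩ hx1 ⟨w2, p2, b2⟩ hx2 h
        have h1 := mem_spFinset.1 (Finset.mem_product.1 hx1).1
        have h2 := mem_spFinset.1 (Finset.mem_product.1 hx2).1
        obtain ⟨e1, e2, e3⟩ := Phi_inj h1 h2 h
        simp only [Prod.ext_iff]
        exact ⟨e1, e2, e3⟩
      · intro v hv
        obtain ⟨w, p, b, hw, heq⟩ := Phi_surj (mem_spFinset.1 hv)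
        exact ⟨(w, p, b), Finset.mem_product.2 ⟨mem_spFinset.2 hw, Finset.mem_univ _⟩, heq⟩
      · intro x hx
        rfl
    rw [← hbij]
    rw [Finset.sum_product]
    apply Finset.sum_congr rfl
    intro w hw
    have hw' := mem_spFinset.1 hw
    have hcalc : ∀ y : Fin (n+1) × Bool,
        (X : ℤ[X]) ^ (numOddFactors (Phi w y.1 y.2)) =
          (X : ℤ[X]) ^ (numOddFactors w) * (if y.1 = 0 ∧ y.2 = true then X else 1) := by
      rintro ⟨p, b⟩
      rw [Phi_numOdd hw' p b, pow_add]
      congr 1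
      split_ifs <;> simp
    rw [Finset.sum_congr rfl (fun y _ => hcalc y), ← Finset.mul_sum]
    congr 1
    -- ∑ (p,b), ite = X + (2n+1)
    rw [Fintype.sum_prod_type]
    have hrow : ∀ p : Fin (n+1),
        (∑ b : Bool, (if p = 0 ∧ b = true then (X : ℤ[X]) else 1))
          = (if p = 0 then X - 1 else 0) + 2 := by
      intro p
      rw [Fintype.sum_bool]
      by_cases h : p = 0 <;> simp [h] <;> ring
    rw [Finset.sum_congr rfl (fun p _ => hrow p), Finset.sum_add_distrib,
      Finset.sum_ite_eq' univ (0 : Fin (n+1)) (fun _ => (X : ℤ[X]) - 1)]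
    simp only [Finset.mem_univ, if_true, Finset.sum_const, Finset.card_univ, Fintype.card_fin,
      nsmul_eq_mul]
    have hC : (C (2 * (n : ℤ) + 1) : ℤ[X]) = 2 * (n : ℤ[X]) + 1 := by
      rw [map_add, map_mul, map_one, map_ofNat, Polynomial.C_eq_natCast]
    rw [hC]
    push_cast
    ring

end E
section F
open scoped Classical
open Polynomial
variable {n : ℕ}

lemma bigC_eq (n k kb : ℕ) :
    bigC n k kb = ((spFinset n).filter
      (fun w => numOddFactors w = k ∧ numEvenFactors w = kb)).card := by
  rw [bigC]
  rw [Nat.card_congr (Equiv.subtypeEquivRight (q := fun w => w ∈ (spFinset n).filter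
      (fun w => numOddFactors w = k ∧ numEvenFactors w = kb)) ?_)]
  · exact Nat.card_eq_finsetCard _
  · intro w
    simp [Finset.mem_filter, mem_spFinset, and_assoc]

lemma sum_bigC (n k : ℕ) :
    ∑ kb ∈ range (n+1), bigC n k kb =
      ((spFinset n).filter (fun w => numOddFactors w = k)).card := by
  rw [Finset.card_eq_sum_card_fiberwise (f := numEvenFactors) (t := range (n+1))
    (fun w _ => Finset.mem_range.2 (Nat.lt_succ_of_le (numEven_le w)))]
  apply Finset.sum_congr rfl
  intro kb _
  rw [bigC_eq, Finset.filter_filter]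

theorem bigC_total_generating_function' (n : ℕ) :
    ∑ k ∈ Finset.range (n + 1), ∑ kb ∈ Finset.range (n + 1),
        Polynomial.C (bigC n k kb : ℤ) * Polynomial.X ^ k =
      ∏ i ∈ Finset.range n, (Polynomial.X + Polynomial.C (2 * (i : ℤ) + 1)) := by
  rw [← key n]
  have hstep : ∀ k ∈ range (n+1), ∑ kb ∈ range (n + 1), C ((bigC n k kb : ℤ)) * X ^ k
      = C ((((spFinset n).filter (fun w => numOddFactors w = k)).card : ℤ)) * X ^ k := by
    intro k _
    rw [← Finset.sum_mul, ← map_sum]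
    congr 2
    rw [← Nat.cast_sum]
    exact_mod_cast congrArg (fun m : ℕ => (m : ℤ)) (sum_bigC n k)
  rw [Finset.sum_congr rfl hstep]
  rw [← Finset.sum_fiberwise_of_maps_to (g := fun w => numOddFactors w)
    (fun w _ => Finset.mem_range.2 (Nat.lt_succ_of_le (numOdd_le w)))
    (fun w => (X : ℤ[X]) ^ numOddFactors w)]
  apply Finset.sum_congr rfl
  intro k _
  rw [Finset.sum_congr rfl (fun w hw => by
    rw [(Finset.mem_filter.1 hw).2]), Finset.sum_const, nsmul_eq_mul]
  rw [Polynomial.C_eq_natCast]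

end F

/-- for every `n`, in `ℤ[X]`:
`Σ_{k,k̄} C(n,k,k̄)·X^k = (X+1)(X+3)⋯(X+2n−1) = ∏_{i=0}^{n−1}(X+2i+1)`.
(The sums are finite; `C(n,k,k̄) = 0` for `k + k̄ > n`, so summing `k` and `k̄` over
`0,…,n` captures every nonzero term. For `n = 0` both sides equal `1`.) -/
theorem bigC_total_generating_function (n : ℕ) :
    ∑ k ∈ Finset.range (n + 1), ∑ kb ∈ Finset.range (n + 1),
        Polynomial.C (bigC n k kb : ℤ) * Polynomial.X ^ k =
      ∏ i ∈ Finset.range n, (Polynomial.X + Polynomial.C (2 * (i : ℤ) + 1)) := by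
  exact bigC_total_generating_function' n
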